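/- The k-linear map Hom_A(P_2, k_ε) → Hom_A(P_3, k_ε), g ↦ g ∘ d_3, has kernel of k-dimension 2n² − 1 and image of k-dimension 2n² − 1. -/

import Mathlib

/-!
Common setting (from the paper "The Anick resolution of the co-unit of the free unitary
quantum group", arXiv:2403.06663):

`k` is a field and `n ≥ 2`.  `S` is the set of `2n²` generators `u∘_{j,i}, u•_{j,i}`,
`(j,i) ∈ {1,…,n}²`, with the involution `*` exchanging `u∘_{j,i}` and `u•_{j,i}`.
Indices are realized `0`-based as elements of `Fin n` (so the index `1` is `fin1 = 0`,
the index `n` is `finN = n-1`, and `σ(i) = n-i+1` is `Fin.rev`).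
-/

namespace UnPlusAnick

/-- A generator: a color (`false` = white `∘`, `true` = black `•`) and a pair of indices. -/
abbrev Gen (n : ℕ) := Bool × Fin n × Fin n

/-- The involution `*` on the generators: it flips the color and keeps the indices. -/
def genStar {n : ℕ} (g : Gen n) : Gen n := (!g.1, g.2)

/-- An `n × n` matrix with entries in the set of generators. -/
abbrev Mat (n : ℕ) := Fin n → Fin n → Gen n

/-- The fundamental matrix `u`, `u_{j,i} = u∘_{j,i}`. -/
def uMat (n : ℕ) : Mat n := fun j i => (false, j, i)

/-- The transpose `vᵀ`. -/
def mT {n : ℕ} (v : Mat n) : Mat n := fun j i => v i j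

/-- The matrix `v^σ`, `(v^σ)_{j,i} = (v_{σ(j),σ(i)})^*`. -/
def mS {n : ℕ} (v : Mat n) : Mat n := fun j i => genStar (v j.rev i.rev)

/-- The matrix `v^δ`, `(v^δ)_{j,i} = (v_{σ(i),σ(j)})^*`; thus `v^δ = (v^σ)ᵀ`. -/
def mD {n : ℕ} (v : Mat n) : Mat n := fun j i => genStar (v i.rev j.rev)

/-- The set `V = {u, uᵀ, u^σ, u^δ}`. -/
def V (n : ℕ) : Set (Mat n) := {uMat n, mT (uMat n), mS (uMat n), mD (uMat n)}

/-- The index `1` of `{1, …, n}`, as the `0`-based element `0` of `Fin n`. -/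
def fin1 (n : ℕ) (hn : 2 ≤ n) : Fin n := ⟨0, by omega⟩

/-- The index `n` of `{1, …, n}`, as the `0`-based element `n - 1` of `Fin n`. -/
def finN (n : ℕ) (hn : 2 ≤ n) : Fin n := ⟨n - 1, by omega⟩

theorem genStar_genStar {n : ℕ} (g : Gen n) : genStar (genStar g) = g := by simp [genStar]

theorem mS_mS {n : ℕ} (v : Mat n) : mS (mS v) = v := by
  funext j i; simp [mS, genStar_genStar]

theorem mD_mD {n : ℕ} (v : Mat n) : mD (mD v) = v := by
  funext j i; simp [mD, genStar_genStar]

theorem mS_mD {n : ℕ} (v : Mat n) : mS (mD v) = mT v := by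
  funext j i; simp [mS, mD, mT, genStar_genStar]

theorem mD_mS {n : ℕ} (v : Mat n) : mD (mS v) = mT v := by
  funext j i; simp [mS, mD, mT, genStar_genStar]

/-- `V` is closed under transposition. -/
theorem V_mT {n : ℕ} {v : Mat n} (hv : v ∈ V n) : mT v ∈ V n := by
  simp only [V, Set.mem_insert_iff, Set.mem_singleton_iff] at hv ⊢
  rcases hv with rfl | rfl | rfl | rfl
  · exact Or.inr (Or.inl rfl)
  · exact Or.inl rfl
  · exact Or.inr (Or.inr (Or.inr rfl))
  · exact Or.inr (Or.inr (Or.inl rfl))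

/-- `V` is closed under `v ↦ v^σ`. -/
theorem V_mS {n : ℕ} {v : Mat n} (hv : v ∈ V n) : mS v ∈ V n := by
  simp only [V, Set.mem_insert_iff, Set.mem_singleton_iff] at hv ⊢
  rcases hv with rfl | rfl | rfl | rfl
  · exact Or.inr (Or.inr (Or.inl rfl))
  · exact Or.inr (Or.inr (Or.inr rfl))
  · exact Or.inl (mS_mS _)
  · exact Or.inr (Or.inl (mS_mD _))

/-- `V` is closed under `v ↦ v^δ`. -/
theorem V_mD {n : ℕ} {v : Mat n} (hv : v ∈ V n) : mD v ∈ V n := by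
  simp only [V, Set.mem_insert_iff, Set.mem_singleton_iff] at hv ⊢
  rcases hv with rfl | rfl | rfl | rfl
  · exact Or.inr (Or.inr (Or.inr rfl))
  · exact Or.inr (Or.inr (Or.inl rfl))
  · exact Or.inr (Or.inl (mD_mS _))
  · exact Or.inl (mD_mD _)

/-! ### Words and the free algebra -/

/-- Words in the generators: the free monoid over the set of generators. -/
abbrev Word (n : ℕ) := FreeMonoid (Gen n)

/-- The free unital associative `k`-algebra on the generators, realized as the monoid algebra
of the free monoid of words; its canonical `k`-basis is the set of words. -/
abbrev FreeAlg (k : Type*) [Field k] (n : ℕ) := MonoidAlgebra k (Word n)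

/-- A word, viewed as a monomial in the free algebra. -/
noncomputable def wd (k : Type*) [Field k] {n : ℕ} (w : Word n) : FreeAlg k n :=
  MonoidAlgebra.of k (Word n) w

/-- The relation `b^v_{j,i} = ∑_{s=1}^{n} v_{j,σ(s)} (v^δ)_{s,σ(i)} − δ_{j,i} · 1`. -/
noncomputable def brel (k : Type*) [Field k] {n : ℕ} (v : Mat n) (j i : Fin n) : FreeAlg k n :=
  (∑ s : Fin n, wd k (FreeMonoid.of (v j s.rev) * FreeMonoid.of (mD v s i.rev)))
    - if j = i then 1 else 0

/-- The set of relations `R = {b^v_{j,i} : v ∈ V, (j,i) ∈ {1,…,n}²}`. -/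
def rels (k : Type*) [Field k] (n : ℕ) : Set (FreeAlg k n) :=
  {x | ∃ v ∈ V n, ∃ j i : Fin n, x = brel k v j i}

/-- `b̃^v = v_{n,n}(v^δ)_{1,1} − ∑_{s=2}^{n} ∑_{t=1}^{n−1} v_{t,σ(s)}(v^δ)_{s,σ(t)} + (n−2)·1`. -/
noncomputable def btil (k : Type*) [Field k] (n : ℕ) (hn : 2 ≤ n) (v : Mat n) : FreeAlg k n :=
  wd k (FreeMonoid.of (v (finN n hn) (finN n hn)) * FreeMonoid.of (mD v (fin1 n hn) (fin1 n hn)))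
    - (∑ s ∈ Finset.univ.filter (fun s : Fin n => s ≠ fin1 n hn),
        ∑ t ∈ Finset.univ.filter (fun t : Fin n => t ≠ finN n hn),
          wd k (FreeMonoid.of (v t s.rev) * FreeMonoid.of (mD v s t.rev)))
    + ((n - 2 : ℕ) : FreeAlg k n)

/-! ### The monomial order and tips -/

/-- The strict order on the generators: every black generator is smaller than every white one;
`u•_{t,s} < u•_{j,i}` iff `(j,i) <` `(t,s)` lexicographically, and `u∘_{t,s} < u∘_{j,i}` iff
`(t,s) < (j,i)` lexicographically. -/
def genLT {n : ℕ} (g h : Gen n) : Prop :=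
  (g.1 = true ∧ h.1 = false) ∨
    (g.1 = true ∧ h.1 = true ∧ toLex h.2 < toLex g.2) ∨
    (g.1 = false ∧ h.1 = false ∧ toLex g.2 < toLex h.2)

/-- The degreewise lexicographic extension of the order on generators to words:
`w ≤ w'` iff `w = w'`, or `w` is shorter than `w'`, or they have the same length and `w`
precedes `w'` lexicographically letter by letter. -/
def wordLE {n : ℕ} (w w' : Word n) : Prop :=
  w = w' ∨ (FreeMonoid.toList w).length < (FreeMonoid.toList w').length ∨
    ((FreeMonoid.toList w).length = (FreeMonoid.toList w').length ∧
      List.Lex genLT (FreeMonoid.toList w) (FreeMonoid.toList w'))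

/-- `IsTip f t`: the word `t` is the `≤`-largest word occurring with nonzero coefficient in
`f`, i.e. `Tip(f) = t`. -/
def IsTip (k : Type*) [Field k] {n : ℕ} (f : FreeAlg k n) (t : Word n) : Prop :=
  f.coeff t ≠ 0 ∧ ∀ w : Word n, f.coeff w ≠ 0 → wordLE w t

/-- `w` divides `w'` (as words in the free monoid). -/
def WDvd {n : ℕ} (w w' : Word n) : Prop := ∃ w₁ w₂ : Word n, w' = w₁ * w * w₂

/-! ### The ideal of relations -/

/-- The two-sided ideal `I` of the free algebra generated by the set of relations `R`. -/
noncomputable def idl (k : Type*) [Field k] (n : ℕ) : TwoSidedIdeal (FreeAlg k n) :=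
  TwoSidedIdeal.span (rels k n)

/-- The set `Tip(I)` of tips of nonzero elements of `I`. -/
def TipSet (k : Type*) [Field k] (n : ℕ) : Set (Word n) :=
  {w | ∃ f : FreeAlg k n, f ∈ idl k n ∧ f ≠ 0 ∧ IsTip k f w}

/-! ### Reductions and ambiguities -/

/-- `φ` is a one-step reduction by `f`: there are fixed words `w₁`, `w₂` such that `φ` maps the
word `w₁ Tip(f) w₂` to `w₁ (Tip(f) − c⁻¹ f) w₂`, where `c` is the leading coefficient of `f`,
and fixes every other word. -/
def IsOneStep (k : Type*) [Field k] {n : ℕ} (f : FreeAlg k n)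
    (φ : FreeAlg k n →ₗ[k] FreeAlg k n) : Prop :=
  f ≠ 0 ∧ ∃ (w₁ w₂ t : Word n), IsTip k f t ∧
    φ (wd k (w₁ * t * w₂)) = wd k w₁ * (wd k t - (f.coeff t)⁻¹ • f) * wd k w₂ ∧
    ∀ w : Word n, w ≠ w₁ * t * w₂ → φ (wd k w) = wd k w

/-- A reduction by a set `G`: a finite composition of one-step reductions by nonzero elements
of `G`. -/
inductive IsReduction (k : Type*) [Field k] {n : ℕ} (G : Set (FreeAlg k n)) :
    (FreeAlg k n →ₗ[k] FreeAlg k n) → Prop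
  | id : IsReduction k G LinearMap.id
  | comp {φ ψ : FreeAlg k n →ₗ[k] FreeAlg k n} {g : FreeAlg k n} (hg : g ∈ G)
      (hφ : IsOneStep k g φ) (hψ : IsReduction k G ψ) : IsReduction k G (φ ∘ₗ ψ)

/-- `(g, g', w₁, w₂)` is an inclusion ambiguity of `G`. -/
def IsInclusionAmbiguity (k : Type*) [Field k] {n : ℕ} (G : Set (FreeAlg k n))
    (g g' : FreeAlg k n) (w₁ w₂ : Word n) : Prop :=
  g ∈ G ∧ g' ∈ G ∧ g ≠ 0 ∧ g' ≠ 0 ∧ g ≠ g' ∧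
    ∃ t t' : Word n, IsTip k g t ∧ IsTip k g' t' ∧ w₁ * t * w₂ = t'

/-- The inclusion ambiguity `(g, g', w₁, w₂)` of `G` resolves. -/
def InclusionAmbiguityResolves (k : Type*) [Field k] {n : ℕ} (G : Set (FreeAlg k n))
    (g g' : FreeAlg k n) (w₁ w₂ : Word n) : Prop :=
  ∀ t t' : Word n, IsTip k g t → IsTip k g' t' →
    ∃ φ₁ φ₂ : FreeAlg k n →ₗ[k] FreeAlg k n, IsReduction k G φ₁ ∧ IsReduction k G φ₂ ∧
      φ₁ (wd k t' - (g'.coeff t')⁻¹ • g') = φ₂ (wd k w₁ * (wd k t - (g.coeff t)⁻¹ • g) * wd k w₂)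

/-- `(g₁, g₂, w₁, w₂)` is an overlap ambiguity of `G`. -/
def IsOverlapAmbiguity (k : Type*) [Field k] {n : ℕ} (G : Set (FreeAlg k n))
    (g₁ g₂ : FreeAlg k n) (w₁ w₂ : Word n) : Prop :=
  g₁ ∈ G ∧ g₂ ∈ G ∧ g₁ ≠ 0 ∧ g₂ ≠ 0 ∧ ¬(w₁ = 1 ∧ w₂ = 1) ∧
    ∃ t₁ t₂ : Word n, IsTip k g₁ t₁ ∧ IsTip k g₂ t₂ ∧ t₁ * w₂ = w₁ * t₂ ∧
      ¬WDvd t₂ w₂ ∧ ¬WDvd t₁ w₁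

/-- The overlap ambiguity `(g₁, g₂, w₁, w₂)` of `G` resolves. -/
def OverlapAmbiguityResolves (k : Type*) [Field k] {n : ℕ} (G : Set (FreeAlg k n))
    (g₁ g₂ : FreeAlg k n) (w₁ w₂ : Word n) : Prop :=
  ∀ t₁ t₂ : Word n, IsTip k g₁ t₁ → IsTip k g₂ t₂ →
    ∃ φ₁ φ₂ : FreeAlg k n →ₗ[k] FreeAlg k n, IsReduction k G φ₁ ∧ IsReduction k G φ₂ ∧
      φ₁ ((wd k t₁ - (g₁.coeff t₁)⁻¹ • g₁) * wd k w₂) = φ₂ (wd k w₁ * (wd k t₂ - (g₂.coeff t₂)⁻¹ • g₂))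

/-! ### Gröbner bases -/

/-- `G` is a Gröbner basis of the two-sided ideal `J` with respect to the order: `G ⊆ J` and
the tip of every nonzero element of `J` is divisible by the tip of some nonzero element
of `G`. -/
def IsGroebner (k : Type*) [Field k] {n : ℕ} (G : Set (FreeAlg k n))
    (J : TwoSidedIdeal (FreeAlg k n)) : Prop :=
  (∀ g ∈ G, g ∈ J) ∧
    ∀ f : FreeAlg k n, f ∈ J → f ≠ 0 → ∀ t : Word n, IsTip k f t →
      ∃ g ∈ G, g ≠ 0 ∧ ∃ tg : Word n, IsTip k g tg ∧ WDvd tg t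

/-- A minimal Gröbner basis: `0 ∉ G` and the tip of no element of `G` divides the tip of a
different element of `G`. -/
def IsMinimalGroebner (k : Type*) [Field k] {n : ℕ} (G : Set (FreeAlg k n))
    (J : TwoSidedIdeal (FreeAlg k n)) : Prop :=
  IsGroebner k G J ∧ (0 : FreeAlg k n) ∉ G ∧
    ∀ g ∈ G, ∀ g' ∈ G, g ≠ g' → ∀ t t' : Word n, IsTip k g t → IsTip k g' t' → ¬WDvd t t'

/-- A reduced Gröbner basis: minimal, every element has leading coefficient `1`, and the tip of
no element of `G` divides a word occurring with nonzero coefficient in a different element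
of `G`. -/
def IsReducedGroebner (k : Type*) [Field k] {n : ℕ} (G : Set (FreeAlg k n))
    (J : TwoSidedIdeal (FreeAlg k n)) : Prop :=
  IsMinimalGroebner k G J ∧ (∀ g ∈ G, ∀ t : Word n, IsTip k g t → g.coeff t = 1) ∧
    ∀ g ∈ G, ∀ g' ∈ G, g ≠ g' → ∀ t : Word n, IsTip k g t →
      ∀ w : Word n, g'.coeff w ≠ 0 → ¬WDvd t w

/-! ### Monoidal ideals -/

/-- A monoidal ideal of the free monoid of words: a set of words containing all multiples of
its elements. -/
def IsMonIdeal {n : ℕ} (M : Set (Word n)) : Prop :=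
  ∀ w ∈ M, ∀ w₁ w₂ : Word n, w₁ * w * w₂ ∈ M

/-- `N` generates `M` as a monoidal ideal: `M` is the smallest monoidal ideal containing `N`. -/
def GeneratesMonIdeal {n : ℕ} (N M : Set (Word n)) : Prop :=
  IsMonIdeal M ∧ N ⊆ M ∧ ∀ M' : Set (Word n), IsMonIdeal M' → N ⊆ M' → M ⊆ M'

/-! ### Chain words -/

/-- `v^{[ℓ]}`: equal to `v` for odd `ℓ` and to `v^δ` for even `ℓ`. -/
def pw {n : ℕ} (l : ℕ) (v : Mat n) : Mat n := if l % 2 = 1 then v else mD v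

/-- The word `v^{(ℓ)}_{j,i}` (for `ℓ ≥ 1`). -/
def chainWord (n : ℕ) (hn : 2 ≤ n) (v : Mat n) (l : ℕ) (j i : Fin n) : Word n :=
  if l = 1 then FreeMonoid.of (v j i.rev)
  else if l % 2 = 0 then
    FreeMonoid.of (v j (finN n hn)) *
      (FreeMonoid.of (mD v (fin1 n hn) (finN n hn)) *
          FreeMonoid.of (v (fin1 n hn) (finN n hn))) ^ ((l - 2) / 2) *
      FreeMonoid.of (mD v (fin1 n hn) i.rev)
  else
    FreeMonoid.of (v j (finN n hn)) *
      (FreeMonoid.of (mD v (fin1 n hn) (finN n hn)) *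
          FreeMonoid.of (v (fin1 n hn) (finN n hn))) ^ ((l - 3) / 2) *
      FreeMonoid.of (mD v (fin1 n hn) (finN n hn)) * FreeMonoid.of (v (fin1 n hn) i.rev)

/-- The set `C_ℓ = {v^{(ℓ)}_{j,i} : v ∈ V, (j,i) ∈ {1,…,n}²}` of `ℓ`-chains. -/
def Cset (n : ℕ) (hn : 2 ≤ n) (l : ℕ) : Set (Word n) :=
  {w | ∃ v ∈ V n, ∃ j i : Fin n, w = chainWord n hn v l j i}

/-! ### The quotient algebra `A = F/I`, the counit and the modules of the resolution -/

/-- The relation identifying each element of `R` with `0`; the induced ring congruence realizes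
the quotient `A = F/I` by the two-sided ideal `I` generated by `R`. -/
def relR (k : Type*) [Field k] (n : ℕ) : FreeAlg k n → FreeAlg k n → Prop :=
  fun a b => a ∈ rels k n ∧ b = 0

/-- The `k`-algebra `A = F/I`. -/
abbrev Aq (k : Type*) [Field k] (n : ℕ) := RingQuot (relR k n)

/-- The quotient map `F → A = F/I`. -/
noncomputable def pr (k : Type*) [Field k] (n : ℕ) : FreeAlg k n →ₐ[k] Aq k n :=
  RingQuot.mkAlgHom k (relR k n)

/-- The class `v_{j,i} + I ∈ A` of a generator. -/
noncomputable def gen (k : Type*) [Field k] {n : ℕ} (v : Mat n) (j i : Fin n) : Aq k n :=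
  pr k n (wd k (FreeMonoid.of (v j i)))

/-- The ring homomorphism `Aᵐᵒᵖ →+* k` induced by `ε` (using the commutativity of `k`). -/
noncomputable def epsOp (k : Type*) [Field k] (n : ℕ) (ε : Aq k n →ₐ[k] k) :
    (Aq k n)ᵐᵒᵖ →+* k where
  toFun a := ε a.unop
  map_one' := by simp
  map_mul' a b := by simp [mul_comm]
  map_zero' := by simp
  map_add' a b := by simp

/-- The right `A`-module `k_ε`: the field `k` with the right `A`-action induced by `ε`,
realized as a left module over the opposite algebra `Aᵐᵒᵖ`. -/
def KE (k : Type*) [Field k] (n : ℕ) (_ε : Aq k n →ₐ[k] k) : Type _ := k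

instance (k : Type*) [Field k] (n : ℕ) (ε : Aq k n →ₐ[k] k) : AddCommGroup (KE k n ε) :=
  inferInstanceAs (AddCommGroup k)

instance (k : Type*) [Field k] (n : ℕ) (ε : Aq k n →ₐ[k] k) : Module k (KE k n ε) :=
  inferInstanceAs (Module k k)

instance (k : Type*) [Field k] (n : ℕ) (ε : Aq k n →ₐ[k] k) : One (KE k n ε) := ⟨(1 : k)⟩

noncomputable instance (k : Type*) [Field k] (n : ℕ) (ε : Aq k n →ₐ[k] k) :
    Module ((Aq k n)ᵐᵒᵖ) (KE k n ε) :=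
  Module.compHom k (epsOp k n ε)

instance (k : Type*) [Field k] (n : ℕ) (ε : Aq k n →ₐ[k] k) :
    SMulCommClass ((Aq k n)ᵐᵒᵖ) k (KE k n ε) :=
  ⟨fun a c x => by
    show epsOp k n ε a • (c • x) = c • (epsOp k n ε a • x)
    rw [smul_smul, smul_smul, mul_comm]⟩

/-- The free right `A`-module `P_ℓ = kC_ℓ ⊗ₖ A` with basis `C_ℓ` (for `ℓ ≥ 1`), realized as a
left module over the opposite algebra `Aᵐᵒᵖ`. -/
abbrev Pmod (k : Type*) [Field k] (n : ℕ) (hn : 2 ≤ n) (l : ℕ) :=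
  ↥(Cset n hn l) →₀ Aq k n

/-- The element `v^{(ℓ)}_{j,i} ⊗ a` of `P_ℓ`. -/
noncomputable def bas (k : Type*) [Field k] (n : ℕ) (hn : 2 ≤ n) (l : ℕ) (v : Mat n)
    (hv : v ∈ V n) (j i : Fin n) (a : Aq k n) : Pmod k n hn l :=
  Finsupp.single ⟨chainWord n hn v l j i, ⟨v, hv, j, i, rfl⟩⟩ a

/-- Pre-composition with a homomorphism of right `A`-modules, as the `k`-linear map
`Hom_A(N, k_ε) → Hom_A(M, k_ε)`, `g ↦ g ∘ d`. -/
noncomputable def homMap (k : Type*) [Field k] {n : ℕ} (ε : Aq k n →ₐ[k] k) {M N : Type*}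
    [AddCommMonoid M] [AddCommMonoid N] [Module ((Aq k n)ᵐᵒᵖ) M] [Module ((Aq k n)ᵐᵒᵖ) N]
    (d : M →ₗ[(Aq k n)ᵐᵒᵖ] N) :
    (N →ₗ[(Aq k n)ᵐᵒᵖ] KE k n ε) →ₗ[k] (M →ₗ[(Aq k n)ᵐᵒᵖ] KE k n ε) where
  toFun g := g.comp d
  map_add' _ _ := LinearMap.ext fun _ => rfl
  map_smul' _ _ := LinearMap.ext fun _ => rfl

/-- The right-hand side of the defining formula for `d₂` on the basis element
`v^{(2)}_{j,i} ⊗ 1`. -/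
noncomputable def d2RHS (k : Type*) [Field k] (n : ℕ) (hn : 2 ≤ n) (v : Mat n)
    (hv : v ∈ V n) (j i : Fin n) : Pmod k n hn 1 :=
  (∑ s : Fin n, bas k n hn 1 v hv j s (gen k (mD v) s i.rev))
    + bas k n hn 1 (mD v) (V_mD hv) j.rev i 1
    - (if j = finN n hn ∧ i = finN n hn then
        ∑ s ∈ Finset.univ.filter (fun s : Fin n => s ≠ fin1 n hn),
          ((∑ t : Fin n, bas k n hn 1 v hv t s (gen k (mD v) s t.rev))
            + bas k n hn 1 (mD v) (V_mD hv) s s.rev 1)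
      else 0)

/-- The right-hand side of the defining formula for `d_ℓ`, `ℓ ≥ 3`, on the basis element
`v^{(ℓ)}_{j,i} ⊗ 1`. -/
noncomputable def dTail (k : Type*) [Field k] (n : ℕ) (hn : 2 ≤ n) (l : ℕ) (v : Mat n)
    (hv : v ∈ V n) (j i : Fin n) : Pmod k n hn (l - 1) :=
  (∑ s : Fin n, bas k n hn (l - 1) v hv j s (gen k (pw l v) s i.rev))
    + bas k n hn (l - 1) (mD v) (V_mD hv) j.rev i ((-1 : Aq k n) ^ l)
    + (if j = finN n hn then
        ((bas k n hn (l - 1) (mT v) (V_mT hv) (fin1 n hn) (fin1 n hn)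
              (gen k (pw l (mT v)) i.rev (finN n hn))
            + (if l = 3 then
                ∑ s ∈ Finset.univ.filter (fun s : Fin n => s ≠ fin1 n hn ∧ s ≠ finN n hn),
                  bas k n hn (l - 1) (mT v) (V_mT hv) s s (gen k (pw l (mT v)) i.rev (finN n hn))
              else 0))
          - (if i = finN n hn then
              (∑ s : Fin n, bas k n hn (l - 1) (mT v) (V_mT hv) (fin1 n hn) s
                  (gen k (pw l (mT v)) s (finN n hn)))
                + bas k n hn (l - 1) (mS v) (V_mS hv) (finN n hn) (fin1 n hn) ((-1 : Aq k n) ^ l)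
            else 0))
      else 0)
    + (if j = fin1 n hn ∧ i = finN n hn then
        bas k n hn (l - 1) (mS v) (V_mS hv) (fin1 n hn) (fin1 n hn) ((-1 : Aq k n) ^ l)
          + (if l = 3 then
              ∑ s ∈ Finset.univ.filter (fun s : Fin n => s ≠ fin1 n hn ∧ s ≠ finN n hn),
                bas k n hn (l - 1) (mS v) (V_mS hv) s s ((-1 : Aq k n) ^ l)
            else 0)
      else 0)

/-- The system of identities from STATEMENT 14, for a fixed `v ∈ V`. -/
noncomputable def cond14 (k : Type*) [Field k] {n : ℕ} (hn : 2 ≤ n) (ε : Aq k n →ₐ[k] k)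
    (g : Pmod k n hn 1 →ₗ[(Aq k n)ᵐᵒᵖ] KE k n ε) (v : Mat n) (hv : v ∈ V n) : Prop :=
  ∀ j i : Fin n, g (bas k n hn 1 (mS v) (V_mS hv) j i 1) = -g (bas k n hn 1 v hv i j 1)

/-- The system of identities (1)–(4) from STATEMENT 16, for a fixed `v ∈ V`. -/
noncomputable def cond16 (k : Type*) [Field k] {n : ℕ} (hn : 2 ≤ n) (ε : Aq k n →ₐ[k] k)
    (l : ℕ) (g : Pmod k n hn (l - 1) →ₗ[(Aq k n)ᵐᵒᵖ] KE k n ε) (v : Mat n)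
    (hv : v ∈ V n) : Prop :=
  (∀ j i : Fin n, (j, i) ≠ (fin1 n hn, fin1 n hn) →
      g (bas k n hn (l - 1) (mT v) (V_mT hv) j i 1) =
        -(((-1 : k) ^ l) • g (bas k n hn (l - 1) (mS v) (V_mS hv) j.rev i.rev 1))
          - (if j = finN n hn ∧ i = finN n hn then
              g (bas k n hn (l - 1) v hv (fin1 n hn) (fin1 n hn) 1)
                + (if l = 3 then
                    ∑ s ∈ Finset.univ.filter (fun s : Fin n => s ≠ fin1 n hn ∧ s ≠ finN n hn),
                      g (bas k n hn (l - 1) v hv s s 1)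
                  else 0)
            else 0)) ∧
  (∀ j i : Fin n, (j, i) ≠ (fin1 n hn, fin1 n hn) →
      g (bas k n hn (l - 1) (mD v) (V_mD hv) j i 1) =
        -(((-1 : k) ^ l) • g (bas k n hn (l - 1) v hv j.rev i.rev 1))
          - (if j = finN n hn ∧ i = finN n hn then
              g (bas k n hn (l - 1) (mS v) (V_mS hv) (fin1 n hn) (fin1 n hn) 1)
                + (if l = 3 then
                    ∑ s ∈ Finset.univ.filter (fun s : Fin n => s ≠ fin1 n hn ∧ s ≠ finN n hn),
                      g (bas k n hn (l - 1) (mS v) (V_mS hv) s s 1)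
                  else 0)
            else 0)) ∧
  (g (bas k n hn (l - 1) (mD v) (V_mD hv) (fin1 n hn) (fin1 n hn) 1) =
      -(((-1 : k) ^ l) • g (bas k n hn (l - 1) (mT v) (V_mT hv) (fin1 n hn) (fin1 n hn) 1))
        - ((-1 : k) ^ l) • g (bas k n hn (l - 1) v hv (finN n hn) (finN n hn) 1)
        + (if l = 3 then
            ∑ s ∈ Finset.univ.filter (fun s : Fin n => s ≠ fin1 n hn ∧ s ≠ finN n hn),
              g (bas k n hn (l - 1) (mS v) (V_mS hv) s s 1)
          else 0)) ∧
  (g (bas k n hn (l - 1) (mS v) (V_mS hv) (finN n hn) (finN n hn) 1) =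
      -(if l = 3 then
          ∑ s ∈ Finset.univ.filter (fun s : Fin n => s ≠ fin1 n hn ∧ s ≠ finN n hn),
            g (bas k n hn (l - 1) (mS v) (V_mS hv) s s 1)
        else 0)
        + ((-1 : k) ^ l) • (g (bas k n hn (l - 1) v hv (finN n hn) (finN n hn) 1)
            + (if l = 3 then
                ∑ s ∈ Finset.univ.filter (fun s : Fin n => s ≠ fin1 n hn ∧ s ≠ finN n hn),
                  g (bas k n hn (l - 1) v hv s s 1)
              else 0)))


/-! ### Auxiliary development for Statement 17 -/

section Aux17

variable {k : Type*} [Field k] {n : ℕ}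

theorem fin1_rev (hn : 2 ≤ n) : (fin1 n hn).rev = finN n hn := by
  ext
  simp [fin1, finN, Fin.val_rev]

theorem finN_rev (hn : 2 ≤ n) : (finN n hn).rev = fin1 n hn := by
  ext
  simp [fin1, finN, Fin.val_rev]
  omega

theorem fin1_ne_finN (hn : 2 ≤ n) : fin1 n hn ≠ finN n hn := by
  intro h
  have := congrArg Fin.val h
  simp [fin1, finN] at this
  omega

theorem finN_ne_fin1 (hn : 2 ≤ n) : finN n hn ≠ fin1 n hn := (fin1_ne_finN hn).symm

theorem rev_eq_finN (hn : 2 ≤ n) (i : Fin n) : i.rev = finN n hn ↔ i = fin1 n hn := by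
  rw [← fin1_rev hn, Fin.rev_inj]

theorem rev_eq_fin1 (hn : 2 ≤ n) (i : Fin n) : i.rev = fin1 n hn ↔ i = finN n hn := by
  rw [← finN_rev hn, Fin.rev_inj]

theorem fin1_eq_rev (hn : 2 ≤ n) (i : Fin n) : fin1 n hn = i.rev ↔ i = finN n hn := by
  rw [eq_comm, rev_eq_fin1 hn]

theorem finN_eq_rev (hn : 2 ≤ n) (i : Fin n) : finN n hn = i.rev ↔ i = fin1 n hn := by
  rw [eq_comm, rev_eq_finN hn]

theorem mT_mT (v : Mat n) : mT (mT v) = v := rfl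

theorem mT_mS (v : Mat n) : mT (mS v) = mD v := rfl

theorem mT_mD (v : Mat n) : mT (mD v) = mS v := rfl

theorem mS_mT (v : Mat n) : mS (mT v) = mD v := rfl

theorem mD_mT (v : Mat n) : mD (mT v) = mS v := rfl

theorem uMem : uMat n ∈ V n := Or.inl rfl

theorem tMem : mT (uMat n) ∈ V n := Or.inr (Or.inl rfl)

theorem sMem : mS (uMat n) ∈ V n := Or.inr (Or.inr (Or.inl rfl))

theorem dMem : mD (uMat n) ∈ V n := Or.inr (Or.inr (Or.inr rfl))

theorem cw2 (hn : 2 ≤ n) (v : Mat n) (j i : Fin n) :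
    chainWord n hn v 2 j i =
      FreeMonoid.of (v j (finN n hn)) * FreeMonoid.of (genStar (v i (finN n hn))) := by
  simp [chainWord, mD, Fin.rev_rev, fin1_rev hn]

theorem cwU (hn : 2 ≤ n) (j i : Fin n) :
    chainWord n hn (uMat n) 2 j i =
      FreeMonoid.of (false, j, finN n hn) * FreeMonoid.of (true, i, finN n hn) := by
  rw [cw2 hn]; rfl

theorem cwT (hn : 2 ≤ n) (j i : Fin n) :
    chainWord n hn (mT (uMat n)) 2 j i =
      FreeMonoid.of (false, finN n hn, j) * FreeMonoid.of (true, finN n hn, i) := by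
  rw [cw2 hn]; rfl

theorem cwS (hn : 2 ≤ n) (j i : Fin n) :
    chainWord n hn (mS (uMat n)) 2 j i =
      FreeMonoid.of (true, j.rev, fin1 n hn) * FreeMonoid.of (false, i.rev, fin1 n hn) := by
  rw [cw2 hn]
  simp [mS, genStar, uMat, finN_rev hn]

theorem cwD (hn : 2 ≤ n) (j i : Fin n) :
    chainWord n hn (mD (uMat n)) 2 j i =
      FreeMonoid.of (true, fin1 n hn, j.rev) * FreeMonoid.of (false, fin1 n hn, i.rev) := by
  rw [cw2 hn]
  simp [mD, genStar, uMat, finN_rev hn]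

theorem cwTU (hn : 2 ≤ n) :
    chainWord n hn (mT (uMat n)) 2 (finN n hn) (finN n hn) =
      chainWord n hn (uMat n) 2 (finN n hn) (finN n hn) := by
  rw [cwT hn, cwU hn]

theorem cwDS (hn : 2 ≤ n) :
    chainWord n hn (mD (uMat n)) 2 (finN n hn) (finN n hn) =
      chainWord n hn (mS (uMat n)) 2 (finN n hn) (finN n hn) := by
  rw [cwD hn, cwS hn, finN_rev hn]

theorem of_mul_of_inj {a b c d : Gen n}
    (h : (FreeMonoid.of a * FreeMonoid.of b : Word n) = FreeMonoid.of c * FreeMonoid.of d) :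
    a = c ∧ b = d := by
  have h2 := congrArg FreeMonoid.toList h
  simpa using h2

section KEsec

variable (ε : Aq k n →ₐ[k] k)

theorem ke_op_smul (a : Aq k n) (s : KE k n ε) :
    (MulOpposite.op a) • s = ε a • s := rfl

theorem hom_single {α : Type*} (φ : (α →₀ Aq k n) →ₗ[(Aq k n)ᵐᵒᵖ] KE k n ε)
    (a : α) (b : Aq k n) :
    φ (Finsupp.single a b) = ε b • φ (Finsupp.single a 1) := by
  have h : Finsupp.single a b = (MulOpposite.op b) • Finsupp.single a (1 : Aq k n) := by
    rw [Finsupp.smul_single]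
    congr 1
    simp [MulOpposite.smul_eq_mul_unop]
  rw [h, map_smul, ke_op_smul]

/-- The `A`-linear map `A → k_ε`, `b ↦ ε(b) • c`. -/
noncomputable def lam (c : KE k n ε) : Aq k n →ₗ[(Aq k n)ᵐᵒᵖ] KE k n ε where
  toFun b := ε b • c
  map_add' a b := by
    show ε (a + b) • c = ε a • c + ε b • c
    rw [map_add, add_smul]
  map_smul' r b := by
    show ε (r • b) • c = r • (ε b • c)
    rw [← MulOpposite.op_unop r, ke_op_smul, MulOpposite.smul_eq_mul_unop, MulOpposite.unop_op,
      map_mul, smul_smul, mul_comm]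

/-- Evaluation on the canonical basis gives a `k`-linear equivalence between
`Hom_A(kα ⊗ A, k_ε)` and functions `α → k`. -/
noncomputable def evalEquiv (α : Type*) :
    ((α →₀ Aq k n) →ₗ[(Aq k n)ᵐᵒᵖ] KE k n ε) ≃ₗ[k] (α → k) where
  toFun g a := g (Finsupp.single a 1)
  map_add' g h := rfl
  map_smul' c g := rfl
  invFun f := Finsupp.lsum ℕ (fun a => lam ε (f a))
  left_inv g := by
    apply Finsupp.lhom_ext
    intro a b
    rw [Finsupp.lsum_single, hom_single ε g a b]
    rfl
  right_inv f := by
    funext a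
    show (Finsupp.lsum ℕ (fun a => lam ε (f a))) (Finsupp.single a 1) = f a
    rw [Finsupp.lsum_single]
    show ε (1 : Aq k n) • f a = f a
    rw [map_one, one_smul]

theorem evalEquiv_symm_single {α : Type*} (f : α → k) (a : α) :
    ((evalEquiv ε α).symm f) (Finsupp.single a 1) = f a :=
  congrFun ((evalEquiv ε α).apply_symm_apply f) a

end KEsec

/-- The parameter set of dimension `2n² - 1`. -/
abbrev Dt (n : ℕ) (hn : 2 ≤ n) :=
  {q : Bool × Fin n × Fin n // q ≠ (true, finN n hn, finN n hn)}

/-- The four matrices of `V`, indexed by two booleans. -/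
def mfour (n : ℕ) : Bool → Bool → Mat n := fun c b =>
  match c, b with
  | false, false => uMat n
  | false, true => mT (uMat n)
  | true, false => mS (uMat n)
  | true, true => mD (uMat n)

theorem mfour_mem (c b : Bool) : mfour n c b ∈ V n := by
  cases c <;> cases b <;>
    first
      | exact uMem
      | exact tMem
      | exact sMem
      | exact dMem

/-- An enumeration of the set `C₂` by `Bool × Dt`. -/
def e2f (hn : 2 ≤ n) : Bool × Dt n hn → ↥(Cset n hn 2) := fun q =>
  ⟨chainWord n hn (mfour n q.1 q.2.1.1) 2 q.2.1.2.1 q.2.1.2.2,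
    ⟨mfour n q.1 q.2.1.1, mfour_mem _ _, q.2.1.2.1, q.2.1.2.2, rfl⟩⟩

theorem e2f_injective (hn : 2 ≤ n) : Function.Injective (e2f (n := n) hn) := by
  rintro ⟨c, ⟨⟨b, j, i⟩, h⟩⟩ ⟨c', ⟨⟨b', j', i'⟩, h'⟩⟩ hq
  simp only [e2f, Subtype.mk.injEq] at hq
  cases c <;> cases b <;> cases c' <;> cases b' <;>
    simp only [mfour, cwU hn, cwT hn, cwS hn, cwD hn, Subtype.mk.injEq] at hq <;>
    obtain ⟨h1, h2⟩ := of_mul_of_inj hq <;>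
    simp only [Prod.mk.injEq, Fin.rev_inj, rev_eq_fin1 hn, rev_eq_finN hn, fin1_eq_rev hn,
      finN_eq_rev hn, true_and, and_true, eq_self_iff_true, Bool.false_eq_true,
      Bool.true_eq_false, false_and] at h1 h2 <;>
    first
      | (obtain rfl := h1; obtain rfl := h2; rfl)
      | exact absurd (by rw [h1.2, h2.2]) h'
      | exact absurd (by rw [h1.2, h2.2]) h
      | exact absurd (by rw [← h1.2, ← h2.2]) h'
      | exact absurd (by rw [← h1.2, ← h2.2]) h

theorem e2f_surjective (hn : 2 ≤ n) : Function.Surjective (e2f (n := n) hn) := by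
  rintro ⟨w, hw⟩
  obtain ⟨v, hv, j, i, rfl⟩ := hw
  simp only [V, Set.mem_insert_iff, Set.mem_singleton_iff] at hv
  rcases hv with rfl | rfl | rfl | rfl
  · exact ⟨(false, ⟨(false, j, i), by simp⟩), Subtype.ext rfl⟩
  · by_cases hji : j = finN n hn ∧ i = finN n hn
    · refine ⟨(false, ⟨(false, finN n hn, finN n hn), by simp⟩), Subtype.ext ?_⟩
      show chainWord n hn (uMat n) 2 _ _ = _
      rw [← cwTU hn, hji.1, hji.2]
    · refine ⟨(false, ⟨(true, j, i), ?_⟩), Subtype.ext rfl⟩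
      simp only [Ne, Prod.mk.injEq, true_and]
      exact hji
  · exact ⟨(true, ⟨(false, j, i), by simp⟩), Subtype.ext rfl⟩
  · by_cases hji : j = finN n hn ∧ i = finN n hn
    · refine ⟨(true, ⟨(false, finN n hn, finN n hn), by simp⟩), Subtype.ext ?_⟩
      show chainWord n hn (mS (uMat n)) 2 _ _ = _
      rw [← cwDS hn, hji.1, hji.2]
    · refine ⟨(true, ⟨(true, j, i), ?_⟩), Subtype.ext rfl⟩
      simp only [Ne, Prod.mk.injEq, true_and]
      exact hji

/-- The enumeration of `C₂`, as an equivalence. -/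
noncomputable def e2 (hn : 2 ≤ n) : Bool × Dt n hn ≃ ↥(Cset n hn 2) :=
  Equiv.ofBijective (e2f hn) ⟨e2f_injective hn, e2f_surjective hn⟩

theorem e2_apply (hn : 2 ≤ n) (q : Bool × Dt n hn) : e2 hn q = e2f hn q := rfl

section GGsec

variable (hn : 2 ≤ n) (ε : Aq k n →ₐ[k] k)

open Classical in
/-- The value `g(v^{(2)}_{j,i} ⊗ 1)`, as an element of `k`. -/
noncomputable def GG (g : Pmod k n hn 2 →ₗ[(Aq k n)ᵐᵒᵖ] KE k n ε) (v : Mat n) (j i : Fin n) :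
    k :=
  if h : v ∈ V n then (g (bas k n hn 2 v h j i 1) : KE k n ε) else 0

theorem GG_eq (g : Pmod k n hn 2 →ₗ[(Aq k n)ᵐᵒᵖ] KE k n ε) {v : Mat n} (hv : v ∈ V n)
    (j i : Fin n) : GG hn ε g v j i = g (bas k n hn 2 v hv j i 1) :=
  dif_pos hv

theorem g_bas (g : Pmod k n hn 2 →ₗ[(Aq k n)ᵐᵒᵖ] KE k n ε) {v : Mat n} (hv : v ∈ V n)
    (j i : Fin n) (a : Aq k n) :
    g (bas k n hn 2 v hv j i a) = ε a * GG hn ε g v j i := by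
  rw [GG_eq hn ε g hv j i]
  exact hom_single ε g _ a

theorem sum_insert_fin1 (F : Fin n → k) :
    F (fin1 n hn) +
        ∑ s ∈ Finset.univ.filter (fun s : Fin n => s ≠ fin1 n hn ∧ s ≠ finN n hn), F s
      = ∑ s ∈ Finset.univ.filter (fun s : Fin n => s ≠ finN n hn), F s := by
  have h1 : Finset.univ.filter (fun s : Fin n => s ≠ finN n hn)
      = insert (fin1 n hn)
          (Finset.univ.filter (fun s : Fin n => s ≠ fin1 n hn ∧ s ≠ finN n hn)) := by
    ext t
    simp only [Finset.mem_filter, Finset.mem_univ, true_and, Finset.mem_insert]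
    by_cases ht : t = fin1 n hn
    · simp [ht, fin1_ne_finN hn]
    · simp [ht]
  rw [h1, Finset.sum_insert (by simp)]

theorem sum_rev_filter (F : Fin n → k) :
    ∑ s ∈ Finset.univ.filter (fun s : Fin n => s ≠ finN n hn), F s.rev
      = ∑ s ∈ Finset.univ.filter (fun s : Fin n => s ≠ fin1 n hn), F s := by
  refine Finset.sum_nbij' (fun s => s.rev) (fun s => s.rev) ?_ ?_ ?_ ?_ ?_ <;>
    intro a ha <;>
    simp only [Finset.mem_filter, Finset.mem_univ, true_and, Fin.rev_rev] at * <;>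
    simp_all [Ne, rev_eq_fin1 hn, rev_eq_finN hn]

theorem sum_ite_fin1 (c : k) :
    ∑ s ∈ Finset.univ.filter (fun s : Fin n => s ≠ finN n hn),
        (if s = fin1 n hn then c else 0) = c := by
  rw [Finset.sum_ite_eq' (Finset.univ.filter (fun s : Fin n => s ≠ finN n hn))
    (fin1 n hn) (fun _ => c), if_pos]
  simp [fin1_ne_finN hn]

theorem g_add_k (g : Pmod k n hn 2 →ₗ[(Aq k n)ᵐᵒᵖ] KE k n ε) (a b : Pmod k n hn 2) :
    @Eq k (g (a + b)) (@HAdd.hAdd k k k _ (g a) (g b)) := map_add g a b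

theorem g_sub_k (g : Pmod k n hn 2 →ₗ[(Aq k n)ᵐᵒᵖ] KE k n ε) (a b : Pmod k n hn 2) :
    @Eq k (g (a - b)) (@HSub.hSub k k k _ (g a) (g b)) := map_sub g a b

theorem g_zero_k (g : Pmod k n hn 2 →ₗ[(Aq k n)ᵐᵒᵖ] KE k n ε) :
    @Eq k (g 0) 0 := map_zero g

theorem g_ite_k (g : Pmod k n hn 2 →ₗ[(Aq k n)ᵐᵒᵖ] KE k n ε) (c : Prop) [Decidable c]
    (a b : Pmod k n hn 2) :
    @Eq k (g (if c then a else b)) (@ite k c _ (g a) (g b)) := apply_ite g c a b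

theorem g_dTail3
    (hε : ∀ v ∈ V n, ∀ j i : Fin n, ε (gen k v j i) = if j = i then 1 else 0)
    (g : Pmod k n hn 2 →ₗ[(Aq k n)ᵐᵒᵖ] KE k n ε) (v : Mat n) (hv : v ∈ V n) (j i : Fin n) :
    @Eq k (g (dTail k n hn 3 v hv j i))
      (GG hn ε g v j i.rev - GG hn ε g (mD v) j.rev i
        + (if j = finN n hn then
            (if i = fin1 n hn then
              ∑ s ∈ Finset.univ.filter (fun s : Fin n => s ≠ finN n hn), GG hn ε g (mT v) s s
             else 0)
              - (if i = finN n hn then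
                  GG hn ε g (mT v) (fin1 n hn) (finN n hn)
                    - GG hn ε g (mS v) (finN n hn) (fin1 n hn)
                 else 0)
           else 0)
        - (if j = fin1 n hn ∧ i = finN n hn then
            ∑ s ∈ Finset.univ.filter (fun s : Fin n => s ≠ finN n hn), GG hn ε g (mS v) s s
           else 0)) := by
  have e1 : ε ((-1 : Aq k n) ^ 3) = -1 := by
    rw [map_pow, map_neg, map_one]
    norm_num
  have epw : pw 3 v = v := by norm_num [pw]
  have epwT : pw 3 (mT v) = mT v := by norm_num [pw]
  have h1 : @Eq k (g (∑ s : Fin n, bas k n hn 2 v hv j s (gen k (pw 3 v) s i.rev)))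
      (GG hn ε g v j i.rev) := by
    rw [map_sum, Finset.sum_congr rfl
      (fun s _ => by
        rw [epw, g_bas hn ε g hv j s _, hε v hv s i.rev, ite_mul, one_mul, zero_mul]; exact rfl)]
    exact Fintype.sum_ite_eq' i.rev (fun s => GG hn ε g v j s)
  have h2 : @Eq k (g (bas k n hn 2 (mD v) (V_mD hv) j.rev i ((-1 : Aq k n) ^ 3)))
      (-GG hn ε g (mD v) j.rev i) := by
    rw [g_bas hn ε g (V_mD hv) j.rev i _, e1, neg_one_mul]
  have h3 : @Eq k (g (bas k n hn 2 (mT v) (V_mT hv) (fin1 n hn) (fin1 n hn)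
        (gen k (pw 3 (mT v)) i.rev (finN n hn))
      + (∑ s ∈ Finset.univ.filter (fun s : Fin n => s ≠ fin1 n hn ∧ s ≠ finN n hn),
          bas k n hn 2 (mT v) (V_mT hv) s s (gen k (pw 3 (mT v)) i.rev (finN n hn)))))
      ((if i = fin1 n hn then
          ∑ s ∈ Finset.univ.filter (fun s : Fin n => s ≠ finN n hn), GG hn ε g (mT v) s s
         else 0)) := by
    rw [map_add, map_sum, g_bas hn ε g (V_mT hv) _ _ _, Finset.sum_congr rfl
      (fun s _ => by rw [epwT, g_bas hn ε g (V_mT hv) s s _]; exact rfl)]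
    rw [epwT, hε (mT v) (V_mT hv) i.rev (finN n hn)]
    show (if i.rev = finN n hn then (1 : k) else 0) * GG hn ε g (mT v) (fin1 n hn) (fin1 n hn)
        + ∑ s ∈ Finset.univ.filter (fun s : Fin n => s ≠ fin1 n hn ∧ s ≠ finN n hn),
            (if i.rev = finN n hn then (1 : k) else 0) * GG hn ε g (mT v) s s = _
    simp only [rev_eq_finN hn]
    rw [← Finset.mul_sum, ← mul_add, sum_insert_fin1 hn (fun s => GG hn ε g (mT v) s s),
      ite_mul, one_mul, zero_mul]
  have h4 : @Eq k (g ((∑ s : Fin n, bas k n hn 2 (mT v) (V_mT hv) (fin1 n hn) s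
        (gen k (pw 3 (mT v)) s (finN n hn)))
      + bas k n hn 2 (mS v) (V_mS hv) (finN n hn) (fin1 n hn) ((-1 : Aq k n) ^ 3)))
      (GG hn ε g (mT v) (fin1 n hn) (finN n hn)
          - GG hn ε g (mS v) (finN n hn) (fin1 n hn)) := by
    rw [map_add, map_sum, Finset.sum_congr rfl
      (fun s _ => by
        rw [epwT, g_bas hn ε g (V_mT hv) _ s _, hε (mT v) (V_mT hv) s (finN n hn),
          ite_mul, one_mul, zero_mul]; exact rfl)]
    erw [Fintype.sum_ite_eq' (finN n hn) (fun s => GG hn ε g (mT v) (fin1 n hn) s)]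
    rw [g_bas hn ε g (V_mS hv) _ _ _, e1]
    show GG hn ε g (mT v) (fin1 n hn) (finN n hn)
        + (-1 : k) * GG hn ε g (mS v) (finN n hn) (fin1 n hn) = _
    rw [neg_one_mul, ← sub_eq_add_neg]
  have h5 : @Eq k (g (bas k n hn 2 (mS v) (V_mS hv) (fin1 n hn) (fin1 n hn) ((-1 : Aq k n) ^ 3)
      + (∑ s ∈ Finset.univ.filter (fun s : Fin n => s ≠ fin1 n hn ∧ s ≠ finN n hn),
          bas k n hn 2 (mS v) (V_mS hv) s s ((-1 : Aq k n) ^ 3))))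
      (-(∑ s ∈ Finset.univ.filter (fun s : Fin n => s ≠ finN n hn),
          GG hn ε g (mS v) s s)) := by
    rw [map_add, map_sum, g_bas hn ε g (V_mS hv) _ _ _, Finset.sum_congr rfl
      (fun s _ => by rw [g_bas hn ε g (V_mS hv) s s _, e1]; exact rfl)]
    rw [e1]
    show (-1 : k) * GG hn ε g (mS v) (fin1 n hn) (fin1 n hn)
        + ∑ s ∈ Finset.univ.filter (fun s : Fin n => s ≠ fin1 n hn ∧ s ≠ finN n hn),
            (-1 : k) * GG hn ε g (mS v) s s = _
    rw [← Finset.mul_sum, ← mul_add, sum_insert_fin1 hn (fun s => GG hn ε g (mS v) s s),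
      neg_one_mul]
  simp only [dTail, eq_self_iff_true, if_true, if_pos (rfl : (3 : ℕ) = 3)]
  rw [g_add_k, g_add_k, g_add_k, h1, h2, g_ite_k, g_ite_k, g_zero_k,
    g_sub_k, h3, g_ite_k, g_zero_k, h4, h5]
  have hneg : (if j = fin1 n hn ∧ i = finN n hn then
        -(∑ s ∈ Finset.univ.filter (fun s : Fin n => s ≠ finN n hn), GG hn ε g (mS v) s s)
      else (0 : k))
      = -(if j = fin1 n hn ∧ i = finN n hn then
          (∑ s ∈ Finset.univ.filter (fun s : Fin n => s ≠ finN n hn), GG hn ε g (mS v) s s)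
        else (0 : k)) := by
    split_ifs <;> simp
  rw [hneg, ← sub_eq_add_neg, ← sub_eq_add_neg]

end GGsec

section Solsec

variable (hn : 2 ≤ n)

/-- Diagonal sums avoiding one index. -/
noncomputable def dsum (F : Fin n → Fin n → k) (a : Fin n) : k :=
  ∑ s ∈ Finset.univ.filter (fun s : Fin n => s ≠ a), F s s

theorem dsum_def (F : Fin n → Fin n → k) (a : Fin n) :
    dsum F a = ∑ s ∈ Finset.univ.filter (fun s : Fin n => s ≠ a), F s s := rfl

theorem diag_dsum (F : Fin n → Fin n → k) :
    F (fin1 n hn) (fin1 n hn) + dsum F (fin1 n hn)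
      = F (finN n hn) (finN n hn) + dsum F (finN n hn) := by
  have h : ∀ a : Fin n, F a a + dsum F a = ∑ s, F s s := by
    intro a
    rw [dsum_def, Finset.filter_ne']
    exact Finset.add_sum_erase _ (fun s => F s s) (Finset.mem_univ a)
  rw [h, h]

/-- Extension of a parameter vector to all of `Bool × Fin n × Fin n`. -/
noncomputable def ext' (p : Dt n hn → k) : Bool × Fin n × Fin n → k := fun q =>
  if h : q = (true, finN n hn, finN n hn) then p ⟨(false, finN n hn, finN n hn), by simp⟩
  else p ⟨q, h⟩

noncomputable def xx (p : Dt n hn → k) (j i : Fin n) : k := ext' hn p (false, j, i)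

noncomputable def yy (p : Dt n hn → k) (j i : Fin n) : k := ext' hn p (true, j, i)

theorem yyNN (p : Dt n hn → k) :
    yy hn p (finN n hn) (finN n hn) = xx hn p (finN n hn) (finN n hn) := by
  simp [yy, xx, ext']

noncomputable def zz (p : Dt n hn → k) (j i : Fin n) : k :=
  yy hn p j.rev i.rev
    + (if j = fin1 n hn ∧ i = fin1 n hn then dsum (xx hn p) (finN n hn) else 0)
    - (if j = finN n hn ∧ i = finN n hn then
        dsum (xx hn p) (fin1 n hn) + dsum (yy hn p) (finN n hn) else 0)

noncomputable def ww (p : Dt n hn → k) (j i : Fin n) : k :=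
  xx hn p j.rev i.rev
    + (if j = fin1 n hn ∧ i = fin1 n hn then dsum (yy hn p) (finN n hn) else 0)
    - (if j = finN n hn ∧ i = finN n hn then
        dsum (yy hn p) (fin1 n hn) + dsum (xx hn p) (finN n hn) else 0)

theorem zwNN (p : Dt n hn → k) :
    zz hn p (finN n hn) (finN n hn) = ww hn p (finN n hn) (finN n hn) := by
  have h1 := diag_dsum hn (xx hn p)
  have h2 := diag_dsum hn (yy hn p)
  have h3 := yyNN hn p
  simp only [zz, ww, finN_rev hn, finN_ne_fin1 hn, false_and, if_false, and_self, if_true]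
  linear_combination h2 - h1 + h3

theorem zz_N1 (p : Dt n hn → k) :
    zz hn p (finN n hn) (fin1 n hn) = yy hn p (fin1 n hn) (finN n hn) := by
  simp [zz, finN_rev hn, fin1_rev hn, finN_ne_fin1 hn, fin1_ne_finN hn]

theorem zz_1N (p : Dt n hn → k) :
    zz hn p (fin1 n hn) (finN n hn) = yy hn p (finN n hn) (fin1 n hn) := by
  simp [zz, finN_rev hn, fin1_rev hn, finN_ne_fin1 hn, fin1_ne_finN hn]

theorem ww_N1 (p : Dt n hn → k) :
    ww hn p (finN n hn) (fin1 n hn) = xx hn p (fin1 n hn) (finN n hn) := by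
  simp [ww, finN_rev hn, fin1_rev hn, finN_ne_fin1 hn, fin1_ne_finN hn]

theorem ww_1N (p : Dt n hn → k) :
    ww hn p (fin1 n hn) (finN n hn) = xx hn p (finN n hn) (fin1 n hn) := by
  simp [ww, finN_rev hn, fin1_rev hn, finN_ne_fin1 hn, fin1_ne_finN hn]

theorem sum_zz (p : Dt n hn → k) :
    dsum (zz hn p) (finN n hn)
      = dsum (yy hn p) (fin1 n hn) + dsum (xx hn p) (finN n hn) := by
  have h1 : ∀ s ∈ Finset.univ.filter (fun s : Fin n => s ≠ finN n hn),
      zz hn p s s = yy hn p s.rev s.rev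
        + (if s = fin1 n hn then dsum (xx hn p) (finN n hn) else 0) := by
    intro s hs
    simp only [Finset.mem_filter, Finset.mem_univ, true_and] at hs
    simp [zz, hs, and_self]
  rw [dsum_def, Finset.sum_congr rfl h1, Finset.sum_add_distrib,
    sum_rev_filter hn (fun t => yy hn p t t), sum_ite_fin1 hn]
  rfl

theorem sum_ww (p : Dt n hn → k) :
    dsum (ww hn p) (finN n hn)
      = dsum (xx hn p) (fin1 n hn) + dsum (yy hn p) (finN n hn) := by
  have h1 : ∀ s ∈ Finset.univ.filter (fun s : Fin n => s ≠ finN n hn),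
      ww hn p s s = xx hn p s.rev s.rev
        + (if s = fin1 n hn then dsum (yy hn p) (finN n hn) else 0) := by
    intro s hs
    simp only [Finset.mem_filter, Finset.mem_univ, true_and] at hs
    simp [ww, hs, and_self]
  rw [dsum_def, Finset.sum_congr rfl h1, Finset.sum_add_distrib,
    sum_rev_filter hn (fun t => xx hn p t t), sum_ite_fin1 hn]
  rfl

theorem zz_rev (p : Dt n hn → k) (j i : Fin n) :
    zz hn p j.rev i = yy hn p j i.rev
      + (if j = finN n hn ∧ i = fin1 n hn then dsum (xx hn p) (finN n hn) else 0)
      - (if j = fin1 n hn ∧ i = finN n hn then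
          dsum (xx hn p) (fin1 n hn) + dsum (yy hn p) (finN n hn) else 0) := by
  simp only [zz, Fin.rev_rev, rev_eq_fin1 hn, rev_eq_finN hn]

theorem ww_rev (p : Dt n hn → k) (j i : Fin n) :
    ww hn p j.rev i = xx hn p j i.rev
      + (if j = finN n hn ∧ i = fin1 n hn then dsum (yy hn p) (finN n hn) else 0)
      - (if j = fin1 n hn ∧ i = finN n hn then
          dsum (yy hn p) (fin1 n hn) + dsum (xx hn p) (finN n hn) else 0) := by
  simp only [ww, Fin.rev_rev, rev_eq_fin1 hn, rev_eq_finN hn]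

theorem zz_revr (p : Dt n hn → k) (j i : Fin n) :
    zz hn p j i.rev = yy hn p j.rev i
      + (if j = fin1 n hn ∧ i = finN n hn then dsum (xx hn p) (finN n hn) else 0)
      - (if j = finN n hn ∧ i = fin1 n hn then
          dsum (xx hn p) (fin1 n hn) + dsum (yy hn p) (finN n hn) else 0) := by
  simp only [zz, Fin.rev_rev, rev_eq_fin1 hn, rev_eq_finN hn]

theorem ww_revr (p : Dt n hn → k) (j i : Fin n) :
    ww hn p j i.rev = xx hn p j.rev i
      + (if j = fin1 n hn ∧ i = finN n hn then dsum (yy hn p) (finN n hn) else 0)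
      - (if j = finN n hn ∧ i = fin1 n hn then
          dsum (yy hn p) (fin1 n hn) + dsum (xx hn p) (finN n hn) else 0) := by
  simp only [ww, Fin.rev_rev, rev_eq_fin1 hn, rev_eq_finN hn]

/-- The candidate kernel element attached to a parameter vector. -/
noncomputable def solb (p : Dt n hn → k) : Bool × Dt n hn → k := fun q =>
  match q with
  | (false, ⟨(false, j, i), _⟩) => xx hn p j i
  | (false, ⟨(true, j, i), _⟩) => yy hn p j i
  | (true, ⟨(false, j, i), _⟩) => zz hn p j i
  | (true, ⟨(true, j, i), _⟩) => ww hn p j i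

theorem solb_white (p : Dt n hn → k) (d : Dt n hn) : solb hn p (false, d) = p d := by
  obtain ⟨⟨b, j, i⟩, h⟩ := d
  cases b
  · show xx hn p j i = _
    simp [xx, ext']
  · show yy hn p j i = _
    simp [yy, ext', h]

variable (ε : Aq k n →ₐ[k] k)

/-- The homomorphism `P₂ → k_ε` attached to a parameter vector. -/
noncomputable def gsol (p : Dt n hn → k) : Pmod k n hn 2 →ₗ[(Aq k n)ᵐᵒᵖ] KE k n ε :=
  (evalEquiv ε _).symm (fun c => solb hn p ((e2 hn).symm c))

theorem gsol_val (p : Dt n hn → k) (q : Bool × Dt n hn) :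
    gsol hn ε p (Finsupp.single (e2 hn q) 1) = solb hn p q := by
  rw [gsol, evalEquiv_symm_single, Equiv.symm_apply_apply]

theorem GG_gsol_u (p : Dt n hn → k) (j i : Fin n) :
    GG hn ε (gsol hn ε p) (uMat n) j i = xx hn p j i := by
  rw [GG_eq hn ε _ uMem j i]
  exact gsol_val hn ε p (false, ⟨(false, j, i), by simp⟩)

theorem GG_gsol_s (p : Dt n hn → k) (j i : Fin n) :
    GG hn ε (gsol hn ε p) (mS (uMat n)) j i = zz hn p j i := by
  rw [GG_eq hn ε _ sMem j i]
  exact gsol_val hn ε p (true, ⟨(false, j, i), by simp⟩)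

theorem GG_gsol_t (p : Dt n hn → k) (j i : Fin n) :
    GG hn ε (gsol hn ε p) (mT (uMat n)) j i = yy hn p j i := by
  rw [GG_eq hn ε _ tMem j i]
  by_cases hji : j = finN n hn ∧ i = finN n hn
  · obtain ⟨rfl, rfl⟩ : j = finN n hn ∧ i = finN n hn := hji
    have hb : bas k n hn 2 (mT (uMat n)) tMem (finN n hn) (finN n hn) 1
        = Finsupp.single (e2 hn (false, ⟨(false, finN n hn, finN n hn), by simp⟩)) 1 := by
      unfold bas
      congr 1
      exact Subtype.ext (cwTU hn)
    rw [hb, gsol_val]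
    exact (yyNN hn p).symm
  · have hne : (true, j, i) ≠ (true, finN n hn, finN n hn) := by
      simp only [Ne, Prod.mk.injEq, true_and]
      exact fun hh => hji ⟨hh.1, hh.2⟩
    exact gsol_val hn ε p (false, ⟨(true, j, i), hne⟩)

theorem GG_gsol_d (p : Dt n hn → k) (j i : Fin n) :
    GG hn ε (gsol hn ε p) (mD (uMat n)) j i = ww hn p j i := by
  rw [GG_eq hn ε _ dMem j i]
  by_cases hji : j = finN n hn ∧ i = finN n hn
  · obtain ⟨rfl, rfl⟩ : j = finN n hn ∧ i = finN n hn := hji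
    have hb : bas k n hn 2 (mD (uMat n)) dMem (finN n hn) (finN n hn) 1
        = Finsupp.single (e2 hn (true, ⟨(false, finN n hn, finN n hn), by simp⟩)) 1 := by
      unfold bas
      congr 1
      exact Subtype.ext (cwDS hn)
    rw [hb, gsol_val]
    exact zwNN hn p
  · have hne : (true, j, i) ≠ (true, finN n hn, finN n hn) := by
      simp only [Ne, Prod.mk.injEq, true_and]
      exact fun hh => hji ⟨hh.1, hh.2⟩
    exact gsol_val hn ε p (true, ⟨(true, j, i), hne⟩)

end Solsec

section Kersec

variable (hn : 2 ≤ n) (ε : Aq k n →ₐ[k] k)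

theorem gsol_dTail_zero
    (hε : ∀ v ∈ V n, ∀ j i : Fin n, ε (gen k v j i) = if j = i then 1 else 0)
    (p : Dt n hn → k) (v : Mat n) (hv : v ∈ V n) (j i : Fin n) :
    gsol hn ε p (dTail k n hn 3 v hv j i) = 0 := by
  show @Eq k _ 0
  rw [g_dTail3 hn ε hε _ v hv j i]
  have hv' := hv
  simp only [V, Set.mem_insert_iff, Set.mem_singleton_iff] at hv'
  rcases hv' with rfl | rfl | rfl | rfl
  · simp only [GG_gsol_u hn ε p, GG_gsol_t hn ε p, GG_gsol_s hn ε p, GG_gsol_d hn ε p,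
      ← dsum_def]
    rw [ww_rev hn p j i, zz_N1 hn p, sum_zz hn p]
    by_cases h1 : j = fin1 n hn <;> by_cases h2 : j = finN n hn <;>
      by_cases h3 : i = fin1 n hn <;> by_cases h4 : i = finN n hn <;>
      simp [h1, h2, h3, h4, fin1_ne_finN hn, finN_ne_fin1 hn] <;> ring
  · simp only [mD_mT, mT_mT, mS_mT]
    simp only [GG_gsol_u hn ε p, GG_gsol_t hn ε p, GG_gsol_s hn ε p, GG_gsol_d hn ε p,
      ← dsum_def]
    rw [zz_rev hn p j i, ww_N1 hn p, sum_ww hn p]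
    by_cases h1 : j = fin1 n hn <;> by_cases h2 : j = finN n hn <;>
      by_cases h3 : i = fin1 n hn <;> by_cases h4 : i = finN n hn <;>
      simp [h1, h2, h3, h4, fin1_ne_finN hn, finN_ne_fin1 hn] <;> ring
  · simp only [mD_mS, mT_mS, mS_mS]
    simp only [GG_gsol_u hn ε p, GG_gsol_t hn ε p, GG_gsol_s hn ε p, GG_gsol_d hn ε p,
      ← dsum_def]
    rw [zz_revr hn p j i, ww_1N hn p, sum_ww hn p]
    by_cases h1 : j = fin1 n hn <;> by_cases h2 : j = finN n hn <;>
      by_cases h3 : i = fin1 n hn <;> by_cases h4 : i = finN n hn <;>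
      simp [h1, h2, h3, h4, fin1_ne_finN hn, finN_ne_fin1 hn] <;> ring
  · simp only [mD_mD, mT_mD, mS_mD]
    simp only [GG_gsol_u hn ε p, GG_gsol_t hn ε p, GG_gsol_s hn ε p, GG_gsol_d hn ε p,
      ← dsum_def]
    rw [ww_revr hn p j i, zz_1N hn p, sum_zz hn p]
    by_cases h1 : j = fin1 n hn <;> by_cases h2 : j = finN n hn <;>
      by_cases h3 : i = fin1 n hn <;> by_cases h4 : i = finN n hn <;>
      simp [h1, h2, h3, h4, fin1_ne_finN hn, finN_ne_fin1 hn] <;> ring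

theorem mem_ker_iff (d3 : Pmod k n hn 3 →ₗ[(Aq k n)ᵐᵒᵖ] Pmod k n hn 2)
    (hd3 : ∀ (v : Mat n) (hv : v ∈ V n) (j i : Fin n),
      d3 (bas k n hn 3 v hv j i 1) = dTail k n hn 3 v hv j i)
    (g : Pmod k n hn 2 →ₗ[(Aq k n)ᵐᵒᵖ] KE k n ε) :
    homMap k ε d3 g = 0 ↔
      ∀ (v : Mat n) (hv : v ∈ V n) (j i : Fin n), g (dTail k n hn 3 v hv j i) = 0 := by
  constructor
  · intro h v hv j i
    have h2 := DFunLike.congr_fun h (bas k n hn 3 v hv j i 1)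
    rw [show homMap k ε d3 g (bas k n hn 3 v hv j i 1)
        = g (d3 (bas k n hn 3 v hv j i 1)) from rfl, hd3 v hv j i] at h2
    exact h2
  · intro h
    show g.comp d3 = 0
    apply Finsupp.lhom_ext
    rintro ⟨w, hw⟩ b
    obtain ⟨v, hv, jj, ii, rfl⟩ := hw
    have h1 : (g.comp d3) (Finsupp.single
        (⟨chainWord n hn v 3 jj ii, ⟨v, hv, jj, ii, rfl⟩⟩ : ↥(Cset n hn 3)) 1) = 0 := by
      show g (d3 (bas k n hn 3 v hv jj ii 1)) = 0
      rw [hd3 v hv jj ii]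
      exact h v hv jj ii
    rw [hom_single ε (g.comp d3), h1, smul_zero]
    rfl

theorem hom_eq_zero (g : Pmod k n hn 2 →ₗ[(Aq k n)ᵐᵒᵖ] KE k n ε)
    (h : ∀ (v : Mat n) (hv : v ∈ V n) (j i : Fin n), GG hn ε g v j i = 0) : g = 0 := by
  apply Finsupp.lhom_ext
  rintro ⟨w, hw⟩ b
  obtain ⟨v, hv, jj, ii, rfl⟩ := hw
  have h1 : g (Finsupp.single
      (⟨chainWord n hn v 2 jj ii, ⟨v, hv, jj, ii, rfl⟩⟩ : ↥(Cset n hn 2)) 1) = 0 := by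
    have h2 := h v hv jj ii
    rw [GG_eq hn ε g hv jj ii] at h2
    exact h2
  rw [hom_single ε g, h1, smul_zero]
  rfl

theorem ker_vals_zero
    (hε : ∀ v ∈ V n, ∀ j i : Fin n, ε (gen k v j i) = if j = i then 1 else 0)
    (g : Pmod k n hn 2 →ₗ[(Aq k n)ᵐᵒᵖ] KE k n ε)
    (hE : ∀ (v : Mat n) (hv : v ∈ V n) (j i : Fin n), g (dTail k n hn 3 v hv j i) = 0)
    (hx : ∀ j i : Fin n, GG hn ε g (uMat n) j i = 0)
    (hy : ∀ j i : Fin n, GG hn ε g (mT (uMat n)) j i = 0) :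
    (∀ j i : Fin n, GG hn ε g (mS (uMat n)) j i = 0) ∧
      (∀ j i : Fin n, GG hn ε g (mD (uMat n)) j i = 0) := by
  have E1 : ∀ j i : Fin n,
      GG hn ε g (uMat n) j i.rev - GG hn ε g (mD (uMat n)) j.rev i
        + (if j = finN n hn then
            (if i = fin1 n hn then
              ∑ s ∈ Finset.univ.filter (fun s : Fin n => s ≠ finN n hn),
                GG hn ε g (mT (uMat n)) s s
             else 0)
              - (if i = finN n hn then
                  GG hn ε g (mT (uMat n)) (fin1 n hn) (finN n hn)
                    - GG hn ε g (mS (uMat n)) (finN n hn) (fin1 n hn)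
                 else 0)
           else 0)
        - (if j = fin1 n hn ∧ i = finN n hn then
            ∑ s ∈ Finset.univ.filter (fun s : Fin n => s ≠ finN n hn),
              GG hn ε g (mS (uMat n)) s s
           else 0) = 0 := by
    intro j i
    rw [← g_dTail3 hn ε hε g (uMat n) uMem j i]
    exact hE _ uMem j i
  have E2 : ∀ j i : Fin n,
      GG hn ε g (mT (uMat n)) j i.rev - GG hn ε g (mS (uMat n)) j.rev i
        + (if j = finN n hn then
            (if i = fin1 n hn then
              ∑ s ∈ Finset.univ.filter (fun s : Fin n => s ≠ finN n hn),
                GG hn ε g (uMat n) s s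
             else 0)
              - (if i = finN n hn then
                  GG hn ε g (uMat n) (fin1 n hn) (finN n hn)
                    - GG hn ε g (mD (uMat n)) (finN n hn) (fin1 n hn)
                 else 0)
           else 0)
        - (if j = fin1 n hn ∧ i = finN n hn then
            ∑ s ∈ Finset.univ.filter (fun s : Fin n => s ≠ finN n hn),
              GG hn ε g (mD (uMat n)) s s
           else 0) = 0 := by
    intro j i
    have h2 : @Eq k _ 0 := hE _ tMem j i
    rw [g_dTail3 hn ε hε g _ tMem j i] at h2
    simpa only [mD_mT, mT_mT, mS_mT] using h2
  have hZN1 : GG hn ε g (mS (uMat n)) (finN n hn) (fin1 n hn) = 0 := by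
    have h2 := E2 (fin1 n hn) (fin1 n hn)
    simpa [hx, hy, fin1_rev hn, fin1_ne_finN hn, finN_ne_fin1 hn] using h2
  have hWN1 : GG hn ε g (mD (uMat n)) (finN n hn) (fin1 n hn) = 0 := by
    have h2 := E1 (fin1 n hn) (fin1 n hn)
    simpa [hx, hy, fin1_rev hn, fin1_ne_finN hn, finN_ne_fin1 hn] using h2
  have hZdiag : ∀ s : Fin n, s ≠ finN n hn → GG hn ε g (mS (uMat n)) s s = 0 := by
    intro s hs
    have h2 := E2 s.rev s
    simpa [hx, hy, hWN1, hs, Fin.rev_rev, rev_eq_fin1 hn, rev_eq_finN hn] using h2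
  have hWdiag : ∀ s : Fin n, s ≠ finN n hn → GG hn ε g (mD (uMat n)) s s = 0 := by
    intro s hs
    have h2 := E1 s.rev s
    simpa [hx, hy, hZN1, hs, Fin.rev_rev, rev_eq_fin1 hn, rev_eq_finN hn] using h2
  have hSZ : ∑ s ∈ Finset.univ.filter (fun s : Fin n => s ≠ finN n hn),
      GG hn ε g (mS (uMat n)) s s = 0 := by
    refine Finset.sum_eq_zero fun s hs => hZdiag s ?_
    simpa using (Finset.mem_filter.mp hs).2
  have hSW : ∑ s ∈ Finset.univ.filter (fun s : Fin n => s ≠ finN n hn),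
      GG hn ε g (mD (uMat n)) s s = 0 := by
    refine Finset.sum_eq_zero fun s hs => hWdiag s ?_
    simpa using (Finset.mem_filter.mp hs).2
  constructor
  · intro a b
    have h2 := E2 a.rev b
    simpa [hx, hy, hWN1, hSW, Fin.rev_rev, rev_eq_fin1 hn, rev_eq_finN hn] using h2
  · intro a b
    have h2 := E1 a.rev b
    simpa [hx, hy, hZN1, hSZ, Fin.rev_rev, rev_eq_fin1 hn, rev_eq_finN hn] using h2

end Kersec

theorem card_Dt (hn : 2 ≤ n) : Fintype.card (Dt n hn) = 2 * n ^ 2 - 1 := by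
  have h1 : Fintype.card (Dt n hn) =
      Fintype.card (Bool × Fin n × Fin n) -
        Fintype.card {q : Bool × Fin n × Fin n // q = (true, finN n hn, finN n hn)} :=
    Fintype.card_subtype_compl _
  rw [h1, Fintype.card_subtype_eq]
  have h2 : n ^ 2 = n * n := sq n
  simp [Fintype.card_prod]
  omega

end Aux17

theorem statement_17 (k : Type*) [Field k] (n : ℕ) (hn : 2 ≤ n)
    (ε : Aq k n →ₐ[k] k)
    (hε : ∀ v ∈ V n, ∀ j i : Fin n, ε (gen k v j i) = if j = i then 1 else 0)
    (d3 : Pmod k n hn 3 →ₗ[(Aq k n)ᵐᵒᵖ] Pmod k n hn 2)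
    (hd3 : ∀ (v : Mat n) (hv : v ∈ V n) (j i : Fin n),
      d3 (bas k n hn 3 v hv j i 1) = dTail k n hn 3 v hv j i) :
    Module.rank k (LinearMap.ker (homMap k ε d3)) = ((2 * n ^ 2 - 1 : ℕ) : Cardinal) ∧
      Module.rank k (LinearMap.range (homMap k ε d3)) = ((2 * n ^ 2 - 1 : ℕ) : Cardinal) := by
  classical
  let ρ : ↥(LinearMap.ker (homMap k ε d3)) →ₗ[k] (Dt n hn → k) :=
    { toFun := fun g d =>
        (g : Pmod k n hn 2 →ₗ[(Aq k n)ᵐᵒᵖ] KE k n ε) (Finsupp.single (e2 hn (false, d)) 1)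
      map_add' := fun g h => rfl
      map_smul' := fun c g => rfl }
  have hinj : Function.Injective ρ := by
    rw [injective_iff_map_eq_zero]
    intro g hg
    have hg0 : homMap k ε d3 (↑g) = 0 := LinearMap.mem_ker.mp g.2
    have hE := (mem_ker_iff hn ε d3 hd3 ↑g).mp hg0
    have hx : ∀ j i : Fin n, GG hn ε (↑g) (uMat n) j i = 0 := by
      intro j i
      rw [GG_eq hn ε (↑g) uMem j i]
      exact congrFun hg ⟨(false, j, i), by simp⟩
    have hy : ∀ j i : Fin n, GG hn ε (↑g) (mT (uMat n)) j i = 0 := by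
      intro j i
      by_cases hji : j = finN n hn ∧ i = finN n hn
      · obtain ⟨rfl, rfl⟩ : _ ∧ _ := hji
        rw [GG_eq hn ε (↑g) tMem]
        have hb : bas k n hn 2 (mT (uMat n)) tMem (finN n hn) (finN n hn) 1
            = bas k n hn 2 (uMat n) uMem (finN n hn) (finN n hn) 1 := by
          unfold bas
          congr 1
          exact Subtype.ext (cwTU hn)
        rw [hb, ← GG_eq hn ε (↑g) uMem]
        exact hx _ _
      · have hne : ((true, j, i) : Bool × Fin n × Fin n) ≠ (true, finN n hn, finN n hn) := by
          simp only [Ne, Prod.mk.injEq, true_and]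
          exact fun hh => hji ⟨hh.1, hh.2⟩
        rw [GG_eq hn ε (↑g) tMem]
        exact congrFun hg ⟨(true, j, i), hne⟩
    obtain ⟨hz, hw⟩ := ker_vals_zero hn ε hε (↑g) hE hx hy
    have hg0' : (↑g : Pmod k n hn 2 →ₗ[(Aq k n)ᵐᵒᵖ] KE k n ε) = 0 := by
      apply hom_eq_zero hn ε
      intro v hv j i
      have hv' := hv
      simp only [V, Set.mem_insert_iff, Set.mem_singleton_iff] at hv'
      rcases hv' with rfl | rfl | rfl | rfl
      · exact hx j i
      · exact hy j i
      · exact hz j i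
      · exact hw j i
    exact Subtype.ext (by rw [hg0']; rfl)
  have hsurj : Function.Surjective ρ := by
    intro p
    refine ⟨⟨gsol hn ε p, ?_⟩, ?_⟩
    · rw [LinearMap.mem_ker]
      exact (mem_ker_iff hn ε d3 hd3 _).mpr
        (fun v hv j i => gsol_dTail_zero hn ε hε p v hv j i)
    · funext d
      show gsol hn ε p (Finsupp.single (e2 hn (false, d)) 1) = p d
      rw [gsol_val hn ε p (false, d), solb_white hn p d]
  have hker : Module.rank k (LinearMap.ker (homMap k ε d3))
      = ((2 * n ^ 2 - 1 : ℕ) : Cardinal) := by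
    rw [(LinearEquiv.ofBijective ρ ⟨hinj, hsurj⟩).rank_eq, rank_fun', card_Dt hn]
  have hdom : Module.rank k (Pmod k n hn 2 →ₗ[(Aq k n)ᵐᵒᵖ] KE k n ε)
      = ((2 * (2 * n ^ 2 - 1) : ℕ) : Cardinal) := by
    rw [((evalEquiv ε (↥(Cset n hn 2))).trans
      (LinearEquiv.funCongrLeft k k (e2 hn))).rank_eq, rank_fun']
    norm_cast
    rw [Fintype.card_prod, Fintype.card_bool, card_Dt hn]
  have hrn := LinearMap.rank_range_add_rank_ker (homMap k ε d3)
  rw [hker, hdom] at hrn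
  have hle : Module.rank k (LinearMap.range (homMap k ε d3)) < Cardinal.aleph0 := by
    refine lt_of_le_of_lt ?_ (Cardinal.nat_lt_aleph0 (2 * (2 * n ^ 2 - 1)))
    rw [← hrn]
    exact self_le_add_right _ _
  obtain ⟨m, hm⟩ := Cardinal.lt_aleph0.mp hle
  rw [hm, ← Nat.cast_add] at hrn
  have hmval : m + (2 * n ^ 2 - 1) = 2 * (2 * n ^ 2 - 1) := Nat.cast_inj.mp hrn
  have h4 : 4 ≤ n ^ 2 := by
    calc (4 : ℕ) = 2 ^ 2 := by norm_num
    _ ≤ n ^ 2 := Nat.pow_le_pow_left hn 2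
  refine ⟨hker, ?_⟩
  rw [hm]
  congr 1
  omega

end UnPlusAnick
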